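/- Let G be a Borel probability measure on the unit sphere S = {z ∈ ℝ^N : |z| = 1}, let ε > 0, let n ≥ 2, and let 0 < γ < 1. Then G^{⊗n}{ (z¹,…,z^n) : z¹·z^l ≤ −ε for all 2 ≤ l ≤ n } ≤ 2(1 − γ)/ε + γ^{n−1}. -/

import Mathlib

open MeasureTheory
open scoped RealInnerProductSpace

theorem bary_aux (N : ℕ)
    (G : Measure (EuclideanSpace ℝ (Fin N))) [IsProbabilityMeasure G]
    (hG : G (Metric.sphere (0 : EuclideanSpace ℝ (Fin N)) 1)ᶜ = 0)
    (ε γ : ℝ) (hε : 0 < ε) (hε1 : ε ≤ 1) (hγ0 : 0 < γ) (hγ1 : γ < 1) :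
    (G {w | ENNReal.ofReal γ < G {z | ⟪w, z⟫ ≤ -ε}}).toReal ≤ 2 * (1 - γ) / ε := by
  set S : Set (EuclideanSpace ℝ (Fin N)) := Metric.sphere 0 1 with hS
  set A : EuclideanSpace ℝ (Fin N) → Set (EuclideanSpace ℝ (Fin N)) :=
    fun w => {z | ⟪w, z⟫ ≤ -ε} with hA
  have hA_meas : ∀ w, MeasurableSet (A w) := fun w =>
    (isClosed_le (continuous_const.inner continuous_id) continuous_const).measurableSet
  have hq_meas : Measurable fun w => G (A w) := by
    have hs : MeasurableSet {p : EuclideanSpace ℝ (Fin N) × EuclideanSpace ℝ (Fin N) |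
        ⟪p.1, p.2⟫ ≤ -ε} :=
      (isClosed_le (continuous_fst.inner continuous_snd) continuous_const).measurableSet
    exact measurable_measure_prodMk_left hs
  have hS_meas : MeasurableSet S := Metric.isClosed_sphere.measurableSet
  set B' : Set (EuclideanSpace ℝ (Fin N)) := {w | ENNReal.ofReal γ < G (A w)} with hB'
  have hB'_meas : MeasurableSet B' := hq_meas measurableSet_Ioi
  set B : Set (EuclideanSpace ℝ (Fin N)) := B' ∩ S with hBdef
  have hB_meas : MeasurableSet B := hB'_meas.inter hS_meas
  have hB_sub_S : B ⊆ S := Set.inter_subset_right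
  have hnormB : ∀ z ∈ B, ‖z‖ = 1 := fun z hz => by
    simpa [hS, mem_sphere_zero_iff_norm] using hB_sub_S hz
  -- reduce to B
  have hB'B : G B' ≤ G B := by
    calc G B' ≤ G (B' ∩ S) + G (B' \ S) := measure_le_inter_add_diff G B' S
    _ ≤ G B + G Sᶜ := add_le_add le_rfl (measure_mono (Set.diff_subset_compl B' S))
    _ = G B := by rw [hG, add_zero]
  have htoReal : (G B').toReal ≤ (G B).toReal :=
    ENNReal.toReal_mono (measure_ne_top G B) hB'B
  refine htoReal.trans ?_
  set b : ℝ := (G B).toReal with hb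
  have hb0 : 0 ≤ b := ENNReal.toReal_nonneg
  -- integrability of id on B
  have hInt : Integrable (fun z => z) (G.restrict B) := by
    refine Integrable.mono' (integrable_const 1) measurable_id.aestronglyMeasurable ?_
    filter_upwards [ae_restrict_mem hB_meas] with z hz
    rw [hnormB z hz]
  set m : EuclideanSpace ℝ (Fin N) := ∫ z in B, z ∂G with hm
  -- mass bounds for w ∈ B'
  have hAw_mass : ∀ w ∈ B', γ ≤ (G (A w)).toReal := fun w hw => by
    have h := le_of_lt (show ENNReal.ofReal γ < G (A w) from hw)
    rw [ENNReal.ofReal_le_iff_le_toReal (measure_ne_top G _)] at h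
    exact h
  have hK : ∀ w ∈ B, ∫ z in B, ⟪w, z⟫ ∂G ≤ (1 - γ) - ε * (b - (1 - γ)) := by
    intro w hw
    have hIw : IntegrableOn (fun z => ⟪w, z⟫) B G := hInt.const_inner w
    have hsplit : (∫ z in B ∩ A w, ⟪w, z⟫ ∂G) + ∫ z in B \ A w, ⟪w, z⟫ ∂G
        = ∫ z in B, ⟪w, z⟫ ∂G := integral_inter_add_diff (hA_meas w) hIw
    set x : ℝ := (G (B ∩ A w)).toReal with hx
    set y : ℝ := (G (B \ A w)).toReal with hy
    have hxy : x + y = b := by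
      rw [hx, hy, ← ENNReal.toReal_add (measure_ne_top G _) (measure_ne_top G _),
        measure_inter_add_diff B (hA_meas w)]
    have h1 : (∫ z in B ∩ A w, ⟪w, z⟫ ∂G) ≤ x * (-ε) := by
      calc (∫ z in B ∩ A w, ⟪w, z⟫ ∂G) ≤ ∫ _ in B ∩ A w, (-ε) ∂G := by
            refine setIntegral_mono_on (hIw.mono_set Set.inter_subset_left)
              (integrableOn_const (measure_ne_top G _))
              (hB_meas.inter (hA_meas w)) ?_
            exact fun z hz => hz.2
      _ = x * (-ε) := by rw [setIntegral_const, smul_eq_mul, measureReal_def]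
    have h2 : (∫ z in B \ A w, ⟪w, z⟫ ∂G) ≤ y * 1 := by
      calc (∫ z in B \ A w, ⟪w, z⟫ ∂G) ≤ ∫ _ in B \ A w, (1:ℝ) ∂G := by
            refine setIntegral_mono_on (hIw.mono_set Set.diff_subset)
              (integrableOn_const (measure_ne_top G _))
              (hB_meas.diff (hA_meas w)) ?_
            intro z hz
            have := real_inner_le_norm w z
            rw [hnormB w hw, hnormB z hz.1] at this
            simpa using this
      _ = y * 1 := by rw [setIntegral_const, smul_eq_mul, measureReal_def]
    have hy_le : y ≤ 1 - γ := by
      have hsub : B \ A w ⊆ (A w)ᶜ := fun z hz => hz.2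
      have hcompl : G (A w)ᶜ = 1 - G (A w) := prob_compl_eq_one_sub (hA_meas w)
      have h : y ≤ (G (A w)ᶜ).toReal :=
        ENNReal.toReal_mono (measure_ne_top G _) (measure_mono hsub)
      rw [hcompl, ENNReal.toReal_sub_of_le prob_le_one ENNReal.one_ne_top,
        ENNReal.toReal_one] at h
      have hγA := hAw_mass w hw.1
      linarith
    have hγx := hAw_mass w hw.1
    nlinarith [hε.le]
  have hmm : (0:ℝ) ≤ ⟪m, m⟫ := real_inner_self_nonneg
  have hmeq : ⟪m, m⟫ = ∫ w in B, ⟪m, w⟫ ∂G := (integral_inner hInt m).symm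
  have hfin : ∫ w in B, ⟪m, w⟫ ∂G ≤ b * ((1 - γ) - ε * (b - (1 - γ))) := by
    have hIm : IntegrableOn (fun w => ⟪m, w⟫) B G := hInt.const_inner m
    calc ∫ w in B, ⟪m, w⟫ ∂G ≤ ∫ _ in B, ((1 - γ) - ε * (b - (1 - γ))) ∂G := by
          refine setIntegral_mono_on hIm
            (integrableOn_const (measure_ne_top G _)) hB_meas ?_
          intro w hw
          have heq : ⟪m, w⟫ = ∫ z in B, ⟪w, z⟫ ∂G := by
            rw [real_inner_comm]; exact (integral_inner hInt w).symm
          rw [heq]; exact hK w hw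
    _ = b * ((1 - γ) - ε * (b - (1 - γ))) := by rw [setIntegral_const, smul_eq_mul, measureReal_def]
  have hkey : (0:ℝ) ≤ b * ((1 - γ) - ε * (b - (1 - γ))) :=
    (hmm.trans_eq hmeq).trans hfin
  rw [le_div_iff₀ hε]
  by_contra hcon
  push_neg at hcon
  have hbpos : 0 < b := by nlinarith
  nlinarith [mul_lt_mul_of_pos_right hcon hbpos,
    mul_le_mul_of_nonneg_left hε1 (mul_nonneg hb0 (by linarith : (0:ℝ) ≤ 1 - γ))]

/-- For any Borel probability measure `G` on the unit sphere of `ℝ^N`, any `ε > 0`,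
`n ≥ 2` and `0 < γ < 1`, the probability that `n` i.i.d. samples satisfy
`z¹·z^l ≤ −ε` for all `2 ≤ l ≤ n` is at most `2(1−γ)/ε + γ^(n−1)`. -/
theorem all_overlaps_negative_le (N : ℕ) (hN : 1 ≤ N)
    (G : Measure (EuclideanSpace ℝ (Fin N))) [IsProbabilityMeasure G]
    (hG : G (Metric.sphere (0 : EuclideanSpace ℝ (Fin N)) 1)ᶜ = 0)
    (n : ℕ) (hn : 2 ≤ n) (ε γ : ℝ) (hε : 0 < ε) (hγ0 : 0 < γ) (hγ1 : γ < 1) :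
    ((Measure.pi fun _ : Fin n => G)
        {z : Fin n → EuclideanSpace ℝ (Fin N) |
          ∀ l : Fin n, l ≠ ⟨0, by omega⟩ → ⟪z ⟨0, by omega⟩, z l⟫ ≤ -ε}).toReal ≤
      2 * (1 - γ) / ε + γ ^ (n - 1) := by
  obtain ⟨m, rfl⟩ : ∃ m, n = m + 1 := ⟨n - 1, by omega⟩
  set E := EuclideanSpace ℝ (Fin N) with hE
  set A : E → Set E := fun w => {z | ⟪w, z⟫ ≤ -ε} with hA
  have hA_meas : ∀ w, MeasurableSet (A w) := fun w =>
    (isClosed_le (continuous_const.inner continuous_id) continuous_const).measurableSet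
  set B' : Set E := {w | ENNReal.ofReal γ < G (A w)} with hB'
  have hq_meas : Measurable fun w => G (A w) := by
    have hs : MeasurableSet {p : E × E | ⟪p.1, p.2⟫ ≤ -ε} :=
      (isClosed_le (continuous_fst.inner continuous_snd) continuous_const).measurableSet
    exact measurable_measure_prodMk_left hs
  have hB'_meas : MeasurableSet B' := hq_meas measurableSet_Ioi
  -- step 1 : rewrite the measure of the event via Fubini
  set ν : Measure (Fin m → E) := Measure.pi fun _ : Fin m => G with hν
  set E' : Set (E × (Fin m → E)) := {p | ∀ j : Fin m, ⟪p.1, p.2 j⟫ ≤ -ε} with hE'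
  have hE'_meas : MeasurableSet E' := by
    have : E' = ⋂ j : Fin m, {p : E × (Fin m → E) | ⟪p.1, p.2 j⟫ ≤ -ε} := by
      ext p; simp [hE', Set.mem_iInter]
    rw [this]
    exact MeasurableSet.iInter fun j =>
      (isClosed_le (continuous_fst.inner ((continuous_apply j).comp continuous_snd))
        continuous_const).measurableSet
  have hmp := measurePreserving_piFinSuccAbove (fun _ : Fin (m + 1) => G) 0
  set e := MeasurableEquiv.piFinSuccAbove (fun _ : Fin (m + 1) => E) 0 with he
  have hpre : (⇑e) ⁻¹' E' =
      {z : Fin (m + 1) → E |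
        ∀ l : Fin (m + 1), l ≠ ⟨0, by omega⟩ → ⟪z ⟨0, by omega⟩, z l⟫ ≤ -ε} := by
    ext z
    have hez : e z = (z 0, fun j => z j.succ) := rfl
    simp only [Set.mem_preimage, hez, hE', Set.mem_setOf_eq]
    constructor
    · intro h l hl
      rcases Fin.eq_zero_or_eq_succ l with rfl | ⟨j, rfl⟩
      · exact absurd rfl hl
      · exact h j
    · intro h j
      exact h j.succ (Fin.succ_ne_zero j)
  have hmeas_eq : (Measure.pi fun _ : Fin (m + 1) => G)
      {z : Fin (m + 1) → E |
        ∀ l : Fin (m + 1), l ≠ ⟨0, by omega⟩ → ⟪z ⟨0, by omega⟩, z l⟫ ≤ -ε}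
      = (G.prod ν) E' := by
    rw [← hpre]
    exact hmp.measure_preimage hE'_meas.nullMeasurableSet
  have hprod : (G.prod ν) E' = ∫⁻ w, (G (A w)) ^ m ∂G := by
    rw [Measure.prod_apply hE'_meas]
    congr 1
    ext w
    have hset : (Prod.mk w ⁻¹' E') = Set.univ.pi (fun _ : Fin m => A w) := by
      ext y; simp [hE', hA]
    rw [hset, Measure.pi_pi]
    simp [Finset.prod_const]
  -- step 2 : bound the lintegral
  have hbound : ∫⁻ w, (G (A w)) ^ m ∂G ≤ G B' + (ENNReal.ofReal γ) ^ m := by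
    have hpt : ∀ w, (G (A w)) ^ m ≤ B'.indicator (fun _ => 1) w + (ENNReal.ofReal γ) ^ m := by
      intro w
      by_cases hw : w ∈ B'
      · calc (G (A w)) ^ m ≤ 1 ^ m := pow_le_pow_left' prob_le_one m
        _ = 1 := one_pow m
        _ ≤ _ := by rw [Set.indicator_of_mem hw]; exact le_add_right le_rfl
      · have : G (A w) ≤ ENNReal.ofReal γ := not_lt.1 hw
        calc (G (A w)) ^ m ≤ (ENNReal.ofReal γ) ^ m := pow_le_pow_left' this m
        _ ≤ _ := le_add_left le_rfl
    calc ∫⁻ w, (G (A w)) ^ m ∂G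
        ≤ ∫⁻ w, (B'.indicator (fun _ => 1) w + (ENNReal.ofReal γ) ^ m) ∂G :=
          lintegral_mono hpt
      _ = G B' + (ENNReal.ofReal γ) ^ m := by
          rw [lintegral_add_right _ measurable_const]
          simp [lintegral_indicator, hB'_meas, lintegral_const]
  -- step 3 : bound (G B').toReal
  have hB'_bound : (G B').toReal ≤ 2 * (1 - γ) / ε := by
    rcases le_or_gt ε 1 with hε1 | hε1
    · exact bary_aux N G hG ε γ hε hε1 hγ0 hγ1
    · have hB'S : B' ⊆ (Metric.sphere (0 : E) 1)ᶜ := by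
        intro w hw hwS
        have h0 : A w ∩ Metric.sphere (0 : E) 1 = ∅ := by
          ext z
          simp only [Set.mem_inter_iff, Set.mem_empty_iff_false, iff_false, not_and, hA,
            Set.mem_setOf_eq]
          intro hz hzS
          have h1 := abs_real_inner_le_norm w z
          rw [mem_sphere_zero_iff_norm.1 hzS, mem_sphere_zero_iff_norm.1 hwS] at h1
          have : (-1 : ℝ) ≤ ⟪w, z⟫ := by
            simpa using neg_le_of_abs_le h1
          linarith
        have : G (A w) = 0 := by
          have h2 : G (A w) ≤ G (A w ∩ Metric.sphere (0 : E) 1) +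
              G (A w \ Metric.sphere (0 : E) 1) :=
            measure_le_inter_add_diff G (A w) (Metric.sphere (0 : E) 1)
          have h3 : G (A w \ Metric.sphere (0 : E) 1) ≤ G (Metric.sphere (0 : E) 1)ᶜ :=
            measure_mono (Set.diff_subset_compl _ _)
          have hz : G (A w) ≤ 0 := by
            refine h2.trans ?_
            rw [h0, measure_empty, zero_add]
            exact h3.trans_eq hG
          exact le_antisymm hz zero_le
        rw [Set.mem_setOf_eq, this] at hw
        simp at hw
      have : G B' = 0 := measure_mono_null hB'S hG
      rw [this]
      simp only [ENNReal.toReal_zero]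
      have h2 : (0:ℝ) ≤ 2 * (1 - γ) := by linarith
      exact div_nonneg h2 hε.le
  -- assemble
  rw [hmeas_eq, hprod]
  have htop : G B' + (ENNReal.ofReal γ) ^ m ≠ ⊤ :=
    ENNReal.add_ne_top.2 ⟨measure_ne_top G _, ENNReal.pow_ne_top ENNReal.ofReal_ne_top⟩
  have h1 : (∫⁻ w, (G (A w)) ^ m ∂G).toReal ≤ (G B' + (ENNReal.ofReal γ) ^ m).toReal :=
    ENNReal.toReal_mono htop hbound
  refine h1.trans ?_
  rw [ENNReal.toReal_add (measure_ne_top G _) (ENNReal.pow_ne_top ENNReal.ofReal_ne_top),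
    ENNReal.toReal_pow, ENNReal.toReal_ofReal hγ0.le]
  have hm' : m + 1 - 1 = m := by omega
  rw [hm']
  exact add_le_add hB'_bound le_rfl
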